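/- arXiv:2009.05746 — 2 statements merged into one kernel-verified Lean document; each statement's English description precedes it below -/
import Mathlib

section
/- Let G be a connected graph with 2n vertices possessing a nice perfect matching (one attaining af(G,M) = (2e(G) − v(G))/4). Then gf(G) ≥ n − 1. -/
set_option linter.unusedSectionVars false


open SimpleGraph

variable {V : Type*}

/-- `M` is a perfect matching of `G`, viewed as a set of edges. -/
def IsPM (G : SimpleGraph V) (M : Set (Sym2 V)) : Prop :=
  M ⊆ G.edgeSet ∧ ∀ v : V, ∃! e, e ∈ M ∧ v ∈ e

/-- `G` has a perfect matching. -/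
def HasPM (G : SimpleGraph V) : Prop := ∃ M, IsPM G M

/-- `c` is an `M`-alternating cycle of `G`: a cycle in which every vertex of the
cycle lies on exactly one edge of the cycle belonging to `M`. -/
def IsAltCycle (G : SimpleGraph V) (M : Set (Sym2 V)) {v : V} (c : G.Walk v v) : Prop :=
  c.IsCycle ∧ ∀ w ∈ c.support, ∃! e, e ∈ c.edges ∧ e ∈ M ∧ w ∈ e

/-- `S` is a forcing set of the perfect matching `M` of `G`. -/
def IsForcingSet (G : SimpleGraph V) (M S : Set (Sym2 V)) : Prop :=
  S ⊆ M ∧ ∀ M', IsPM G M' → S ⊆ M' → M' = M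

/-- `S ⊆ E(G) \ M` is an anti-forcing set of `M`: `G - S` has a unique perfect matching. -/
def IsAntiForcingSet (G : SimpleGraph V) (M S : Set (Sym2 V)) : Prop :=
  S ⊆ G.edgeSet \ M ∧ ∃! M', IsPM (G.deleteEdges S) M'

/-- `S` is a global forcing set of `G`. -/
def IsGFS (G : SimpleGraph V) (S : Set (Sym2 V)) : Prop :=
  S ⊆ G.edgeSet ∧ ∀ M M', IsPM G M → IsPM G M' → M ∩ S = M' ∩ S → M = M'

/-- `G` has a perfect matching avoiding the vertex set `A`, i.e. `G - A` has a p.m. -/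
def PMAvoiding (G : SimpleGraph V) (A : Set V) : Prop :=
  ∃ M, M ⊆ G.edgeSet ∧ (∀ e ∈ M, ∀ v, v ∈ e → v ∉ A) ∧
    ∀ v, v ∉ A → ∃! e, e ∈ M ∧ v ∈ e

/-- `c` is a nice cycle of `G`: `G - V(c)` has a perfect matching. -/
def IsNiceCycle (G : SimpleGraph V) {v : V} (c : G.Walk v v) : Prop :=
  c.IsCycle ∧ PMAvoiding G {w | w ∈ c.support}

/-- The global forcing number. -/
noncomputable def gf (G : SimpleGraph V) : ℕ :=
  sInf {k | ∃ S, IsGFS G S ∧ S.ncard = k}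

/-- The anti-forcing number of a perfect matching `M`. -/
noncomputable def af (G : SimpleGraph V) (M : Set (Sym2 V)) : ℕ :=
  sInf {k | ∃ S, IsAntiForcingSet G M S ∧ S.ncard = k}

/-- The maximum anti-forcing number. -/
noncomputable def Af (G : SimpleGraph V) : ℕ :=
  sSup {k | ∃ M, IsPM G M ∧ af G M = k}

/-- The forcing number of a perfect matching `M`. -/
noncomputable def fnum (G : SimpleGraph V) (M : Set (Sym2 V)) : ℕ :=
  sInf {k | ∃ S, IsForcingSet G M S ∧ S.ncard = k}

/-- The maximum forcing number. -/
noncomputable def Fnum (G : SimpleGraph V) : ℕ :=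
  sSup {k | ∃ M, IsPM G M ∧ fnum G M = k}

namespace NPM

variable {G : SimpleGraph V} {M : Set (Sym2 V)}

theorem pm_unique (hM : IsPM G M) {e f : Sym2 V} {v : V}
    (he : e ∈ M) (hve : v ∈ e) (hf : f ∈ M) (hvf : v ∈ f) : e = f := by
  obtain ⟨g, -, hg⟩ := hM.2 v
  rw [hg e ⟨he, hve⟩, hg f ⟨hf, hvf⟩]

noncomputable def me (hM : IsPM G M) (v : V) : Sym2 V := (hM.2 v).exists.choose

theorem me_mem (hM : IsPM G M) (v : V) : me hM v ∈ M := (hM.2 v).exists.choose_spec.1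
theorem mem_me (hM : IsPM G M) (v : V) : v ∈ me hM v := (hM.2 v).exists.choose_spec.2

theorem me_eq (hM : IsPM G M) {m : Sym2 V} (hm : m ∈ M) {v : V} (hv : v ∈ m) :
    me hM v = m := pm_unique hM (me_mem hM v) (mem_me hM v) hm hv

theorem me_not_diag (hM : IsPM G M) (v : V) : ¬ (me hM v).IsDiag :=
  G.not_isDiag_of_mem_edgeSet (hM.1 (me_mem hM v))

noncomputable def pr (hM : IsPM G M) (v : V) : V := Sym2.Mem.other (mem_me hM v)

theorem pr_spec (hM : IsPM G M) (v : V) : s(v, pr hM v) = me hM v := Sym2.other_spec _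

theorem pr_mem (hM : IsPM G M) (v : V) : pr hM v ∈ me hM v := by
  rw [← pr_spec hM v]; exact Sym2.mem_iff.mpr (Or.inr rfl)

theorem pr_ne (hM : IsPM G M) (v : V) : pr hM v ≠ v := by
  intro h
  apply me_not_diag hM v
  rw [← pr_spec hM v, h]
  exact Sym2.mk_isDiag_iff.mpr rfl

theorem me_pr (hM : IsPM G M) (v : V) : me hM (pr hM v) = me hM v :=
  me_eq hM (me_mem hM v) (pr_mem hM v)

theorem pr_pr (hM : IsPM G M) (v : V) : pr hM (pr hM v) = v := by
  have h1 : s(pr hM v, pr hM (pr hM v)) = s(v, pr hM v) := by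
    rw [pr_spec hM (pr hM v), me_pr hM v, pr_spec hM v]
  rcases Sym2.eq_iff.mp h1 with ⟨h, h'⟩ | ⟨h, h'⟩
  · exact absurd h (pr_ne hM v)
  · exact h'

theorem pr_eq (hM : IsPM G M) {x y : V} (h : s(x, y) ∈ M) : pr hM x = y := by
  have hx : x ∈ s(x, y) := Sym2.mem_iff.mpr (Or.inl rfl)
  have hme : me hM x = s(x, y) := me_eq hM h hx
  have h1 : s(x, pr hM x) = s(x, y) := by rw [pr_spec hM x, hme]
  rcases Sym2.eq_iff.mp h1 with ⟨-, h'⟩ | ⟨h1', h2'⟩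
  · exact h'
  · exfalso
    apply G.not_isDiag_of_mem_edgeSet (hM.1 h)
    rw [← h1']
    exact Sym2.mk_isDiag_iff.mpr rfl

theorem mk_out {α : Type*} (z : Sym2 α) : s(z.out.1, z.out.2) = z := by
  have : (z.out.1, z.out.2) = z.out := rfl
  exact z.out_eq

theorem mem_out {α : Type*} (z : Sym2 α) {w : α} (hw : w ∈ z) :
    w = z.out.1 ∨ w = z.out.2 := by
  rw [← mk_out z] at hw
  exact Sym2.mem_iff.mp hw

/-! ### Part 1 : the anti-forcing equality implies the pairing property -/

section Part1

variable [Fintype V]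

/-- the set of non-matching edges, as a finset -/
noncomputable def Tf (G : SimpleGraph V) (M : Set (Sym2 V)) : Finset (Sym2 V) :=
  (G.edgeSet \ M).toFinite.toFinset

theorem mem_Tf {z : Sym2 V} : z ∈ Tf G M ↔ z ∈ G.edgeSet ∧ z ∉ M := by
  simp [Tf, Set.Finite.mem_toFinset, Set.mem_diff]

theorem Tf_eq (hM : IsPM G M) {z : Sym2 V} (hz : z ∈ Tf G M) {x w : V}
    (hx : x ∈ z) (hw : w ∈ z) (hxw : w ≠ x) :
    z = s(x, w) ∧ me hM x ≠ me hM w := by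
  obtain ⟨y, hy⟩ := Sym2.mem_iff_exists.mp hx
  have hwy : w = y := by
    rcases Sym2.mem_iff.mp (hy ▸ hw) with h | h
    · exact absurd h hxw
    · exact h
  subst hwy
  refine ⟨hy, fun hmeq => ?_⟩
  have hxm : x ∈ me hM w := hmeq ▸ mem_me hM x
  have : me hM w = s(w, pr hM w) := (pr_spec hM w).symm
  rcases Sym2.mem_iff.mp (this ▸ hxm) with h | h
  · exact hxw h.symm
  · subst h
    have hzme : z = me hM w := by rw [hy, ← pr_spec hM w, Sym2.eq_swap]
    exact (mem_Tf.mp hz).2 (hzme ▸ me_mem hM w)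

open Classical in
/-- the lower endpoint of a cross edge, w.r.t. a rank function on edges -/
noncomputable def lf (hM : IsPM G M) (r : Sym2 V → ℕ) (z : Sym2 V) : V :=
  if r (me hM z.out.1) < r (me hM z.out.2) then z.out.1 else z.out.2

theorem lf_mem (hM : IsPM G M) (r : Sym2 V → ℕ) (z : Sym2 V) : lf hM r z ∈ z := by
  unfold lf
  split
  · exact Sym2.out_fst_mem z
  · exact Sym2.out_snd_mem z

theorem lf_spec (hM : IsPM G M) {r : Sym2 V → ℕ} (hr : Function.Injective r)
    {z : Sym2 V} (hz : z ∈ Tf G M) :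
    ∀ w ∈ z, w ≠ lf hM r z → r (me hM (lf hM r z)) < r (me hM w) := by
  intro w hw hne
  have hout : ¬ z.IsDiag := G.not_isDiag_of_mem_edgeSet (mem_Tf.mp hz).1
  have houtne : z.out.1 ≠ z.out.2 := by
    intro h
    apply hout
    rw [← mk_out z]
    exact Sym2.mk_isDiag_iff.mpr h
  by_cases hcond : r (me hM z.out.1) < r (me hM z.out.2)
  · simp only [lf, if_pos hcond] at hne ⊢
    rcases mem_out z hw with h1 | h1
    · exact absurd h1 hne
    · subst h1; exact hcond
  · simp only [lf, if_neg hcond] at hne ⊢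
    rcases mem_out z hw with h1 | h1
    · subst h1
      have hne2 : me hM z.out.1 ≠ me hM z.out.2 :=
        (Tf_eq hM hz (Sym2.out_fst_mem z) (Sym2.out_snd_mem z) houtne.symm).2
      have := hr.ne hne2
      omega
    · exact absurd h1 hne

theorem lf_eq_iff (hM : IsPM G M) {r : Sym2 V → ℕ} (hr : Function.Injective r)
    {z : Sym2 V} (hz : z ∈ Tf G M) {x : V} (hx : x ∈ z) :
    lf hM r z = x ↔ ∀ w ∈ z, w ≠ x → r (me hM x) < r (me hM w) := by
  constructor
  · rintro rfl; exact lf_spec hM hr hz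
  · intro h
    by_contra hne
    have h1 := lf_spec hM hr hz x hx (fun hh => hne hh.symm)
    have h2 := h (lf hM r z) (lf_mem hM r z) hne
    omega

open Classical in
/-- number of cross edges whose lower endpoint is `x` -/
noncomputable def Dg (hM : IsPM G M) (r : Sym2 V → ℕ) (x : V) : ℕ :=
  ((Tf G M).filter fun z => lf hM r z = x).card

/-- which of the two endpoints of a matching edge gets its pending cross edges deleted -/
def del (hM : IsPM G M) (r : Sym2 V → ℕ) (eqv : V → ℕ) (x : V) : Prop :=
  Dg hM r x < Dg hM r (pr hM x) ∨
    (Dg hM r x = Dg hM r (pr hM x) ∧ eqv x < eqv (pr hM x))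

theorem del_xor (hM : IsPM G M) (r : Sym2 V → ℕ) {eqv : V → ℕ}
    (heqv : Function.Injective eqv) (x : V) :
    del hM r eqv x ↔ ¬ del hM r eqv (pr hM x) := by
  have hne : eqv x ≠ eqv (pr hM x) := fun h => pr_ne hM x (heqv h).symm
  unfold del
  rw [pr_pr hM x]
  omega

open Classical in
noncomputable def Sr (hM : IsPM G M) (r : Sym2 V → ℕ) (eqv : V → ℕ) : Finset (Sym2 V) :=
  (Tf G M).filter fun z => del hM r eqv (lf hM r z)

theorem pm_eq_of_subset {G' : SimpleGraph V} {M' : Set (Sym2 V)}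
    (hM : IsPM G' M) (hM' : IsPM G' M') (h : M ⊆ M') : M' = M := by
  apply Set.Subset.antisymm _ h
  intro z hz
  have hv : z.out.1 ∈ z := Sym2.out_fst_mem z
  obtain ⟨g, -, hg⟩ := hM'.2 z.out.1
  have h1 : z = g := hg z ⟨hz, hv⟩
  have h2 : me hM z.out.1 = g := hg _ ⟨h (me_mem hM z.out.1), mem_me hM z.out.1⟩
  rw [h1, ← h2]
  exact me_mem hM z.out.1

theorem Sr_antiforcing (hM : IsPM G M) {r : Sym2 V → ℕ} (hr : Function.Injective r)
    {eqv : V → ℕ} (heqv : Function.Injective eqv) :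
    IsAntiForcingSet G M ↑(Sr hM r eqv) := by
  classical
  have hsub : (↑(Sr hM r eqv) : Set (Sym2 V)) ⊆ G.edgeSet \ M := by
    intro z hz
    have hz' : z ∈ Sr hM r eqv := hz
    have := Finset.mem_filter.mp hz'
    exact Set.mem_diff z |>.mpr ⟨(mem_Tf.mp this.1).1, (mem_Tf.mp this.1).2⟩
  have hMpm : IsPM (G.deleteEdges ↑(Sr hM r eqv)) M := by
    constructor
    · intro z hz
      rw [edgeSet_deleteEdges]
      refine ⟨hM.1 hz, ?_⟩
      intro hzs
      exact (hsub hzs).2 hz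
    · exact hM.2
  refine ⟨hsub, M, hMpm, ?_⟩
  intro M' hM'
  by_contra hne
  have hM'E : M' ⊆ G.edgeSet \ ↑(Sr hM r eqv) := by
    rw [← edgeSet_deleteEdges]; exact hM'.1
  -- the set of matching edges missing from M' is nonempty
  have hWne : ∃ m ∈ M, m ∉ M' := by
    by_contra hc
    push_neg at hc
    exact hne (pm_eq_of_subset hMpm hM' hc)
  set Wf : Finset (Sym2 V) := M.toFinite.toFinset.filter (· ∉ M') with hWf
  have hWfne : Wf.Nonempty := by
    obtain ⟨m, hm, hm'⟩ := hWne
    exact ⟨m, Finset.mem_filter.mpr ⟨(Set.Finite.mem_toFinset _).mpr hm, hm'⟩⟩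
  obtain ⟨m₀, hm₀W, hm₀min⟩ := Wf.exists_min_image r hWfne
  have hm₀M : m₀ ∈ M := (Set.Finite.mem_toFinset _).mp (Finset.mem_filter.mp hm₀W).1
  have hm₀M' : m₀ ∉ M' := (Finset.mem_filter.mp hm₀W).2
  -- both endpoints of m₀ are non-deleted, contradiction
  have key : ∀ v ∈ m₀, ¬ del hM r eqv v := by
    intro v hv hdel
    have hmev : me hM v = m₀ := me_eq hM hm₀M hv
    obtain ⟨z, ⟨hzM', hvz⟩⟩ := (hM'.2 v).exists
    have hzE : z ∈ G.edgeSet := (hM'E hzM').1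
    have hznS : z ∉ Sr hM r eqv := fun h => (hM'E hzM').2 h
    have hznM : z ∉ M := by
      intro hzM
      exact hm₀M' ((pm_unique hM hzM hvz hm₀M (hmev ▸ mem_me hM v) : z = m₀) ▸ hzM')
    have hzTf : z ∈ Tf G M := mem_Tf.mpr ⟨hzE, hznM⟩
    obtain ⟨w, hw⟩ := Sym2.mem_iff_exists.mp hvz
    have hwv : w ≠ v := by
      rintro rfl
      exact G.not_isDiag_of_mem_edgeSet hzE (hw ▸ Sym2.mk_isDiag_iff.mpr rfl)
    have hwz : w ∈ z := hw ▸ Sym2.mem_iff.mpr (Or.inr rfl)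
    -- the matching edge of w is also missing from M'
    have hmew : me hM w ∉ M' := by
      intro hmem
      obtain ⟨g, -, hg⟩ := hM'.2 w
      have h1 : z = g := hg z ⟨hzM', hwz⟩
      have h2 : me hM w = g := hg _ ⟨hmem, mem_me hM w⟩
      exact hznM ((h1.trans h2.symm) ▸ me_mem hM w)
    have hmewne : me hM w ≠ m₀ := by
      intro hh
      have : w ∈ m₀ := hh ▸ mem_me hM w
      have : w = pr hM v := by
        have hm₀v : m₀ = s(v, pr hM v) := by rw [pr_spec hM v, hmev]
        rcases Sym2.mem_iff.mp (hm₀v ▸ this) with h | h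
        · exact absurd h hwv
        · exact h
      apply hznM
      rw [hw, this, pr_spec hM v, hmev]
      exact hm₀M
    have hmewW : me hM w ∈ Wf := Finset.mem_filter.mpr
      ⟨(Set.Finite.mem_toFinset _).mpr (me_mem hM w), hmew⟩
    have hlt : r (me hM v) < r (me hM w) := by
      have h1 := hm₀min _ hmewW
      have h2 : r m₀ ≠ r (me hM w) := fun h => hmewne (hr h).symm
      rw [hmev]; omega
    -- so v is the lower endpoint of z
    have hlfz : lf hM r z = v := by
      rw [lf_eq_iff hM hr hzTf hvz]
      intro w' hw' hw'v
      rcases Sym2.mem_iff.mp (hw ▸ hw') with h | h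
      · exact absurd h hw'v
      · subst h; exact hlt
    exact hznS (Finset.mem_filter.mpr ⟨hzTf, hlfz ▸ hdel⟩)
  have h1 := key m₀.out.1 (Sym2.out_fst_mem m₀)
  have hdiag : m₀.out.1 ≠ m₀.out.2 := by
    intro h
    apply G.not_isDiag_of_mem_edgeSet (hM.1 hm₀M)
    rw [← mk_out m₀]
    exact Sym2.mk_isDiag_iff.mpr h
  have hprm : pr hM m₀.out.1 = m₀.out.2 := by
    apply pr_eq hM
    rw [mk_out m₀]
    exact hm₀M
  have h2 := key m₀.out.2 (Sym2.out_snd_mem m₀)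
  rw [← hprm] at h2
  exact h1 ((del_xor hM r heqv m₀.out.1).mpr h2)

open Classical in
theorem card_Tf_eq_sum (hM : IsPM G M) (r : Sym2 V → ℕ) :
    (Tf G M).card = ∑ x : V, Dg hM r x :=
  Finset.card_eq_sum_card_fiberwise (fun z _ => Finset.mem_univ (lf hM r z))

open Classical in
theorem card_Sr_eq_sum (hM : IsPM G M) (r : Sym2 V → ℕ) (eqv : V → ℕ) :
    (Sr hM r eqv).card = ∑ x ∈ Finset.univ.filter (del hM r eqv), Dg hM r x := by
  have h1 : (Sr hM r eqv).card =
      ∑ x ∈ Finset.univ.filter (del hM r eqv),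
        ((Sr hM r eqv).filter fun z => lf hM r z = x).card := by
    apply Finset.card_eq_sum_card_fiberwise
    intro z hz
    exact Finset.mem_filter.mpr ⟨Finset.mem_univ _, (Finset.mem_filter.mp hz).2⟩
  rw [h1]
  apply Finset.sum_congr rfl
  intro x hx
  have hdx : del hM r eqv x := (Finset.mem_filter.mp hx).2
  unfold Dg
  congr 1
  ext z
  constructor
  · intro h
    have h1 := Finset.mem_filter.mp h
    have h2 := Finset.mem_filter.mp h1.1
    exact Finset.mem_filter.mpr ⟨h2.1, h1.2⟩
  · intro h
    have h1 := Finset.mem_filter.mp h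
    exact Finset.mem_filter.mpr ⟨Finset.mem_filter.mpr ⟨h1.1, h1.2 ▸ hdx⟩, h1.2⟩

theorem balance (hM : IsPM G M) (haf : 2 * af G M = (Tf G M).card)
    {r : Sym2 V → ℕ} (hr : Function.Injective r) :
    ∀ x : V, Dg hM r x = Dg hM r (pr hM x) := by
  classical
  obtain ⟨eqv, heqv⟩ : ∃ eqv : V → ℕ, Function.Injective eqv :=
    ⟨fun v => ((Fintype.equivFin V) v : ℕ),
     fun a b h => (Fintype.equivFin V).injective (Fin.ext h)⟩
  have hafle : af G M ≤ (Sr hM r eqv).card :=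
    Nat.sInf_le ⟨↑(Sr hM r eqv), Sr_antiforcing hM hr heqv, Set.ncard_coe_finset _⟩
  set D := Dg hM r with hD
  set sdel := Finset.univ.filter (del hM r eqv) with hsdel
  set snot := Finset.univ.filter (fun x => ¬ del hM r eqv x) with hsnot
  have hparts : (Tf G M).card = ∑ x ∈ sdel, D x + ∑ x ∈ snot, D x := by
    rw [card_Tf_eq_sum hM r, ← Finset.sum_filter_add_sum_filter_not Finset.univ
      (del hM r eqv) D]
  have hbij : ∑ x ∈ snot, D x = ∑ x ∈ sdel, D (pr hM x) := by
    apply Finset.sum_nbij' (i := fun x => pr hM x) (j := fun x => pr hM x)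
    · intro a ha
      refine Finset.mem_filter.mpr ⟨Finset.mem_univ _, ?_⟩
      have hna : ¬ del hM r eqv a := (Finset.mem_filter.mp ha).2
      by_contra hnd
      exact hna ((del_xor hM r heqv a).mpr hnd)
    · intro a ha
      refine Finset.mem_filter.mpr ⟨Finset.mem_univ _, ?_⟩
      exact (del_xor hM r heqv a).mp (Finset.mem_filter.mp ha).2
    · intro a _; exact pr_pr hM a
    · intro a _; exact pr_pr hM a
    · intro a _; rw [hD, pr_pr hM a]
  have hpw : ∀ x ∈ sdel, D x ≤ D (pr hM x) := by
    intro x hx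
    rcases (Finset.mem_filter.mp hx).2 with h | h
    · exact le_of_lt h
    · exact le_of_eq h.1
  have hSr : (Sr hM r eqv).card = ∑ x ∈ sdel, D x := card_Sr_eq_sum hM r eqv
  have hptwise : ∀ x ∈ sdel, D x = D (pr hM x) := by
    by_contra hc
    push_neg at hc
    obtain ⟨x0, hx0, hx0ne⟩ := hc
    have hlt : ∑ x ∈ sdel, D x < ∑ x ∈ sdel, D (pr hM x) :=
      Finset.sum_lt_sum hpw ⟨x0, hx0, lt_of_le_of_ne (hpw x0 hx0) hx0ne⟩
    omega
  intro x
  by_cases hx : del hM r eqv x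
  · exact hptwise x (Finset.mem_filter.mpr ⟨Finset.mem_univ _, hx⟩)
  · have hpx : del hM r eqv (pr hM x) := by
      by_contra hnd
      exact hx ((del_xor hM r heqv x).mpr hnd)
    have := hptwise (pr hM x) (Finset.mem_filter.mpr ⟨Finset.mem_univ _, hpx⟩)
    rw [pr_pr hM x] at this
    exact this.symm

open Classical in
theorem fiber_r1 (hM : IsPM G M) {r1 : Sym2 V → ℕ} (hr1 : Function.Injective r1)
    {m : Sym2 V} (hm : m ∈ M) (h0 : r1 m = 0)
    {w : V} (hw : w ∈ m) :
    (Tf G M).filter (fun z => lf hM r1 z = w) = (Tf G M).filter (fun z => w ∈ z) := by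
  have hmew : me hM w = m := me_eq hM hm hw
  ext z
  simp only [Finset.mem_filter]
  constructor
  · rintro ⟨hz, hlf⟩; exact ⟨hz, hlf ▸ lf_mem hM r1 z⟩
  · rintro ⟨hz, hwz⟩
    refine ⟨hz, (lf_eq_iff hM hr1 hz hwz).mpr ?_⟩
    intro w' hw' hne'
    have hneme : me hM w ≠ me hM w' := (Tf_eq hM hz hwz hw' hne').2
    have : r1 (me hM w') ≠ 0 := by
      intro hh
      have : m = me hM w' := hr1 (h0.trans hh.symm)
      exact hneme (hmew.trans this)
    rw [hmew, h0]
    omega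
  
open Classical in
theorem fiber_r2 (hM : IsPM G M) {r2 : Sym2 V → ℕ} (hr2 : Function.Injective r2)
    {m m' : Sym2 V} (hm : m ∈ M) (hm' : m' ∈ M) (h1 : r2 m = 1) (h0 : r2 m' = 0)
    (hbig : ∀ m'' ∈ M, m'' ≠ m → m'' ≠ m' → 1 < r2 m'')
    {w : V} (hw : w ∈ m) :
    (Tf G M).filter (fun z => lf hM r2 z = w) =
      (Tf G M).filter (fun z => w ∈ z ∧ ∀ w' ∈ z, w' ≠ w → w' ∉ m') := by
  have hmew : me hM w = m := me_eq hM hm hw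
  ext z
  simp only [Finset.mem_filter]
  constructor
  · rintro ⟨hz, hlf⟩
    refine ⟨hz, hlf ▸ lf_mem hM r2 z, ?_⟩
    intro w' hw' hne' hw'm'
    have hspec := (lf_eq_iff hM hr2 hz (hlf ▸ lf_mem hM r2 z)).mpr
    have hlt := lf_spec hM hr2 hz w' hw' (hlf ▸ hne')
    rw [hlf, hmew, h1] at hlt
    have : me hM w' = m' := me_eq hM hm' hw'm'
    rw [this, h0] at hlt
    omega
  · rintro ⟨hz, hwz, hcond⟩
    refine ⟨hz, (lf_eq_iff hM hr2 hz hwz).mpr ?_⟩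
    intro w' hw' hne'
    have hneme : me hM w ≠ me hM w' := (Tf_eq hM hz hwz hw' hne').2
    have hne2 : me hM w' ≠ m := fun hh => hneme (hmew.trans hh.symm)
    have hne3 : me hM w' ≠ m' := by
      intro hh
      exact hcond w' hw' hne' (hh ▸ mem_me hM w')
    have := hbig (me hM w') (me_mem hM w') hne2 hne3
    rw [hmew, h1]
    omega

open Classical in
theorem fiber_diff (hM : IsPM G M) {x y u v : V}
    (hm : s(x,y) ∈ M) (hm' : s(u,v) ∈ M) (hne : s(x,y) ≠ s(u,v)) {w : V} (hw : w ∈ s(x,y)) :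
    (Tf G M).filter (fun z => w ∈ z ∧ ¬ (∀ w' ∈ z, w' ≠ w → w' ∉ s(u,v))) =
      (if G.Adj w u then {s(w,u)} else ∅) ∪ (if G.Adj w v then {s(w,v)} else ∅) := by
  have hwm' : w ∉ s(u,v) := by
    intro hwm'
    exact hne (pm_unique hM hm hw hm' hwm')
  ext z
  simp only [Finset.mem_filter, Finset.mem_union]
  constructor
  · rintro ⟨hz, hwz, hcond⟩
    push_neg at hcond
    obtain ⟨w', hw', hne', hw'm'⟩ := hcond
    have hzeq : z = s(w, w') := (Tf_eq hM hz hwz hw' hne').1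
    have hadj : G.Adj w w' := by
      rw [← SimpleGraph.mem_edgeSet, ← hzeq]
      exact (mem_Tf.mp hz).1
    rcases Sym2.mem_iff.mp hw'm' with h | h
    · subst h
      left
      rw [if_pos hadj]
      exact Finset.mem_singleton.mpr hzeq
    · subst h
      right
      rw [if_pos hadj]
      exact Finset.mem_singleton.mpr hzeq
  · intro h
    have key : ∀ c : V, c ∈ s(u,v) → G.Adj w c → z = s(w,c) →
        z ∈ Tf G M ∧ w ∈ z ∧ ¬ (∀ w' ∈ z, w' ≠ w → w' ∉ s(u,v)) := by
      intro c hc hadj hzeq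
      have hzM : z ∉ M := by
        intro hzM
        have hcm : c ∈ z := hzeq ▸ Sym2.mem_iff.mpr (Or.inr rfl)
        have h1 : z = s(u,v) := pm_unique hM hzM hcm hm' hc
        have : w ∈ s(u,v) := h1 ▸ (hzeq ▸ Sym2.mem_iff.mpr (Or.inl rfl))
        exact hwm' this
      refine ⟨mem_Tf.mpr ⟨by rw [hzeq]; exact hadj, hzM⟩,
        hzeq ▸ Sym2.mem_iff.mpr (Or.inl rfl), ?_⟩
      push_neg
      exact ⟨c, hzeq ▸ Sym2.mem_iff.mpr (Or.inr rfl), hadj.ne', hc⟩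
    rcases h with h | h
    · by_cases hadj : G.Adj w u
      · rw [if_pos hadj] at h
        exact key u (Sym2.mem_iff.mpr (Or.inl rfl)) hadj (Finset.mem_singleton.mp h)
      · rw [if_neg hadj] at h; exact absurd h (Finset.notMem_empty z)
    · by_cases hadj : G.Adj w v
      · rw [if_pos hadj] at h
        exact key v (Sym2.mem_iff.mpr (Or.inr rfl)) hadj (Finset.mem_singleton.mp h)
      · rw [if_neg hadj] at h; exact absurd h (Finset.notMem_empty z)

open Classical in
theorem Dg_split (hM : IsPM G M) {x y u v : V}
    (hm : s(x,y) ∈ M) (hm' : s(u,v) ∈ M) (hne : s(x,y) ≠ s(u,v))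
    {r1 r2 : Sym2 V → ℕ} (hr1 : Function.Injective r1) (hr2 : Function.Injective r2)
    (h10 : r1 s(x,y) = 0)
    (h21 : r2 s(x,y) = 1) (h20 : r2 s(u,v) = 0)
    (hbig : ∀ m'' ∈ M, m'' ≠ s(x,y) → m'' ≠ s(u,v) → 1 < r2 m'')
    {w : V} (hw : w ∈ s(x,y)) :
    Dg hM r1 w = Dg hM r2 w +
      ((if G.Adj w u then 1 else 0) + (if G.Adj w v then 1 else 0)) := by
  have hF1 : Dg hM r1 w = ((Tf G M).filter (fun z => w ∈ z)).card := by
    unfold Dg; rw [fiber_r1 hM hr1 hm h10 hw]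
  have hF2 : Dg hM r2 w =
      ((Tf G M).filter (fun z => w ∈ z ∧ ∀ w' ∈ z, w' ≠ w → w' ∉ s(u,v))).card := by
    unfold Dg; rw [fiber_r2 hM hr2 hm hm' h21 h20 hbig hw]
  set F1 := (Tf G M).filter (fun z => w ∈ z) with hF1d
  set F2 := (Tf G M).filter (fun z => w ∈ z ∧ ∀ w' ∈ z, w' ≠ w → w' ∉ s(u,v)) with hF2d
  have hsub : F2 ⊆ F1 := by
    intro z hz
    have h := Finset.mem_filter.mp hz
    exact Finset.mem_filter.mpr ⟨h.1, h.2.1⟩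
  have hdiff : F1 \ F2 =
      (Tf G M).filter (fun z => w ∈ z ∧ ¬ (∀ w' ∈ z, w' ≠ w → w' ∉ s(u,v))) := by
    ext z
    simp only [Finset.mem_sdiff, Finset.mem_filter, hF1d, hF2d]
    tauto
  have hcard : (F1 \ F2).card + F2.card = F1.card := Finset.card_sdiff_add_card_eq_card hsub
  have hX : (F1 \ F2).card =
      (if G.Adj w u then 1 else 0) + (if G.Adj w v then 1 else 0) := by
    rw [hdiff, fiber_diff hM hm hm' hne hw]
    have hwm' : w ∉ s(u,v) := fun hwm' => hne (pm_unique hM hm hw hm' hwm')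
    have huv : u ≠ v := by
      intro h
      exact G.not_isDiag_of_mem_edgeSet (hM.1 hm') (Sym2.mk_isDiag_iff.mpr h)
    have hwu : w ≠ u := fun h => hwm' (h ▸ Sym2.mem_iff.mpr (Or.inl rfl))
    have hwv : w ≠ v := fun h => hwm' (h ▸ Sym2.mem_iff.mpr (Or.inr rfl))
    have hsne : (s(w,u) : Sym2 V) ≠ s(w,v) := by
      intro h
      rcases Sym2.eq_iff.mp h with ⟨-, h2⟩ | ⟨h1, -⟩
      · exact huv h2
      · exact hwv h1
    by_cases hadju : G.Adj w u <;> by_cases hadjv : G.Adj w v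
    · rw [if_pos hadju, if_pos hadjv,
        Finset.card_union_of_disjoint (Finset.disjoint_singleton.mpr hsne)]
      simp [hadju, hadjv]
    · rw [if_pos hadju, if_neg hadjv]; simp [hadju, hadjv]
    · rw [if_neg hadju, if_pos hadjv]; simp [hadju, hadjv]
    · rw [if_neg hadju, if_neg hadjv]; simp [hadju, hadjv]
  omega

/-- The pairing (niceness) property, from the anti-forcing equality. -/
theorem pairing (hM : IsPM G M) (haf : 2 * af G M = (Tf G M).card) :
    ∀ {x y u v : V}, s(x,y) ∈ M → s(u,v) ∈ M → s(x,y) ≠ s(u,v) →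
      G.Adj x u → G.Adj y v := by
  classical
  have main : ∀ x y u v : V, s(x,y) ∈ M → s(u,v) ∈ M → s(x,y) ≠ s(u,v) →
      ((if G.Adj x u then 1 else 0) + (if G.Adj x v then 1 else 0) : ℕ)
      = (if G.Adj y u then 1 else 0) + (if G.Adj y v then 1 else 0) := by
    intro x y u v hm hm' hne
    set ι : Sym2 V → ℕ := fun z => ((Fintype.equivFin (Sym2 V)) z : ℕ) with hι
    have hιinj : Function.Injective ι :=
      fun a b h => (Fintype.equivFin (Sym2 V)).injective (Fin.ext h)
    set r1 : Sym2 V → ℕ := fun z => if z = s(x,y) then 0 else ι z + 1 with hr1d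
    set r2 : Sym2 V → ℕ := fun z =>
      if z = s(u,v) then 0 else if z = s(x,y) then 1 else ι z + 2 with hr2d
    have hr1 : Function.Injective r1 := by
      intro a b h
      simp only [hr1d] at h
      by_cases ha : a = s(x,y) <;> by_cases hb : b = s(x,y)
      · rw [ha, hb]
      · rw [if_pos ha, if_neg hb] at h; omega
      · rw [if_neg ha, if_pos hb] at h; omega
      · rw [if_neg ha, if_neg hb] at h
        exact hιinj (by omega)
    have hr2 : Function.Injective r2 := by
      intro a b h
      simp only [hr2d] at h
      by_cases ha1 : a = s(u,v) <;> by_cases hb1 : b = s(u,v)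
      · rw [ha1, hb1]
      · rw [if_pos ha1, if_neg hb1] at h
        by_cases hb2 : b = s(x,y)
        · rw [if_pos hb2] at h; omega
        · rw [if_neg hb2] at h; omega
      · rw [if_neg ha1, if_pos hb1] at h
        by_cases ha2 : a = s(x,y)
        · rw [if_pos ha2] at h; omega
        · rw [if_neg ha2] at h; omega
      · rw [if_neg ha1, if_neg hb1] at h
        by_cases ha2 : a = s(x,y) <;> by_cases hb2 : b = s(x,y)
        · rw [ha2, hb2]
        · rw [if_pos ha2, if_neg hb2] at h; omega
        · rw [if_neg ha2, if_pos hb2] at h; omega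
        · rw [if_neg ha2, if_neg hb2] at h
          exact hιinj (by omega)
    have h10 : r1 s(x,y) = 0 := by simp [hr1d]
    have h21 : r2 s(x,y) = 1 := by simp [hr2d, hne]
    have h20 : r2 s(u,v) = 0 := by simp [hr2d]
    have hbig : ∀ m'' ∈ M, m'' ≠ s(x,y) → m'' ≠ s(u,v) → 1 < r2 m'' := by
      intro m'' _ h1 h2
      simp [hr2d, h1, h2]
    have hxy : y = pr hM x := (pr_eq hM hm).symm
    have hxmem : x ∈ (s(x,y) : Sym2 V) := Sym2.mem_iff.mpr (Or.inl rfl)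
    have hymem : y ∈ (s(x,y) : Sym2 V) := Sym2.mem_iff.mpr (Or.inr rfl)
    have e1 : Dg hM r1 x = Dg hM r1 y := by rw [hxy]; exact balance hM haf hr1 x
    have e2 : Dg hM r2 x = Dg hM r2 y := by rw [hxy]; exact balance hM haf hr2 x
    have s1 := Dg_split hM hm hm' hne hr1 hr2 h10 h21 h20 hbig hxmem
    have s2 := Dg_split hM hm hm' hne hr1 hr2 h10 h21 h20 hbig hymem
    omega
  intro x y u v hm hm' hne hxu
  have e1 := main x y u v hm hm' hne
  have e2 := main u v x y hm' hm (Ne.symm hne)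
  have c1 : G.Adj v x ↔ G.Adj x v := ⟨Adj.symm, Adj.symm⟩
  have c2 : G.Adj u y ↔ G.Adj y u := ⟨Adj.symm, Adj.symm⟩
  have c3 : G.Adj u x ↔ G.Adj x u := ⟨Adj.symm, Adj.symm⟩
  have c4 : G.Adj v y ↔ G.Adj y v := ⟨Adj.symm, Adj.symm⟩
  rw [c1, c2, c3, c4] at e2
  by_contra hyv
  by_cases h1 : G.Adj x v <;> by_cases h2 : G.Adj y u <;>
    simp [hxu, hyv, h1, h2] at e1 e2

end Part1

/-! ### Part 2 : pairing + connectivity forces `gf ≥ n - 1` -/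

section Part2

/-- swapping two matching edges along a "couple" of cross edges -/
theorem swap_pm {P : Set (Sym2 V)} (hP : IsPM G P) {x y u v : V}
    (hab : s(x,y) ∈ P) (hcd : s(u,v) ∈ P) (hne : s(x,y) ≠ s(u,v))
    (hac : G.Adj x u) (hbd : G.Adj y v) :
    IsPM G ((P \ {s(x,y), s(u,v)}) ∪ {s(x,u), s(y,v)}) := by
  have hxy : x ≠ y := fun h =>
    G.not_isDiag_of_mem_edgeSet (hP.1 hab) (Sym2.mk_isDiag_iff.mpr h)
  have huv : u ≠ v := fun h =>
    G.not_isDiag_of_mem_edgeSet (hP.1 hcd) (Sym2.mk_isDiag_iff.mpr h)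
  have hdisj : ∀ w : V, w ∈ (s(x,y) : Sym2 V) → w ∉ (s(u,v) : Sym2 V) :=
    fun w h1 h2 => hne (pm_unique hP hab h1 hcd h2)
  have hxu : x ≠ u := fun h => hdisj x (Sym2.mem_iff.mpr (Or.inl rfl)) (h ▸ Sym2.mem_iff.mpr (Or.inl rfl))
  have hxv : x ≠ v := fun h => hdisj x (Sym2.mem_iff.mpr (Or.inl rfl)) (h ▸ Sym2.mem_iff.mpr (Or.inr rfl))
  have hyu : y ≠ u := fun h => hdisj y (Sym2.mem_iff.mpr (Or.inr rfl)) (h ▸ Sym2.mem_iff.mpr (Or.inl rfl))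
  have hyv : y ≠ v := fun h => hdisj y (Sym2.mem_iff.mpr (Or.inr rfl)) (h ▸ Sym2.mem_iff.mpr (Or.inr rfl))
  constructor
  · rintro z (⟨hz, -⟩ | hz)
    · exact hP.1 hz
    · rcases hz with hz | hz
      · rw [hz]; exact hac
      · rw [Set.mem_singleton_iff.mp hz]; exact hbd
  · intro w
    by_cases hw : w = x ∨ w = y ∨ w = u ∨ w = v
    · -- w is one of the four special vertices
      rcases hw with h | h | h | h
      · rw [h]
        refine ⟨s(x,u), ⟨Or.inr (Or.inl rfl), Sym2.mem_iff.mpr (Or.inl rfl)⟩, ?_⟩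
        rintro e ⟨(⟨heP, heR⟩ | he), hwe⟩
        · exact absurd (Or.inl (pm_unique hP heP hwe hab (Sym2.mem_iff.mpr (Or.inl rfl)))) heR
        · rcases he with rfl | he
          · rfl
          · rw [Set.mem_singleton_iff.mp he] at hwe
            rcases Sym2.mem_iff.mp hwe with h' | h'
            · exact absurd h' hxy
            · exact absurd h' hxv
      · rw [h]
        refine ⟨s(y,v), ⟨Or.inr (Or.inr rfl), Sym2.mem_iff.mpr (Or.inl rfl)⟩, ?_⟩
        rintro e ⟨(⟨heP, heR⟩ | he), hwe⟩
        · exact absurd (Or.inl (pm_unique hP heP hwe hab (Sym2.mem_iff.mpr (Or.inr rfl)))) heR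
        · rcases he with rfl | he
          · rcases Sym2.mem_iff.mp hwe with h' | h'
            · exact absurd h'.symm hxy
            · exact absurd h' hyu
          · rw [Set.mem_singleton_iff.mp he]
      · rw [h]
        refine ⟨s(x,u), ⟨Or.inr (Or.inl rfl), Sym2.mem_iff.mpr (Or.inr rfl)⟩, ?_⟩
        rintro e ⟨(⟨heP, heR⟩ | he), hwe⟩
        · have he' : e = s(u,v) := pm_unique hP heP hwe hcd (Sym2.mem_iff.mpr (Or.inl rfl))
          exact absurd (Or.inr (Set.mem_singleton_iff.mpr he')) heR
        · rcases he with rfl | he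
          · rfl
          · rw [Set.mem_singleton_iff.mp he] at hwe
            rcases Sym2.mem_iff.mp hwe with h' | h'
            · exact absurd h'.symm hyu
            · exact absurd h' huv
      · rw [h]
        refine ⟨s(y,v), ⟨Or.inr (Or.inr rfl), Sym2.mem_iff.mpr (Or.inr rfl)⟩, ?_⟩
        rintro e ⟨(⟨heP, heR⟩ | he), hwe⟩
        · have he' : e = s(u,v) := pm_unique hP heP hwe hcd (Sym2.mem_iff.mpr (Or.inr rfl))
          exact absurd (Or.inr (Set.mem_singleton_iff.mpr he')) heR
        · rcases he with rfl | he
          · rcases Sym2.mem_iff.mp hwe with h' | h'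
            · exact absurd h'.symm hxv
            · exact absurd h'.symm huv
          · rw [Set.mem_singleton_iff.mp he]
    · -- w is none of the four
      push_neg at hw
      obtain ⟨hw1, hw2, hw3, hw4⟩ := hw
      obtain ⟨e, ⟨heP, hwe⟩, huniq⟩ := hP.2 w
      have heR : e ∉ ({s(x,y), s(u,v)} : Set (Sym2 V)) := by
        rintro (rfl | he)
        · rcases Sym2.mem_iff.mp hwe with h | h
          · exact hw1 h
          · exact hw2 h
        · rw [Set.mem_singleton_iff.mp he] at hwe
          rcases Sym2.mem_iff.mp hwe with h | h
          · exact hw3 h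
          · exact hw4 h
      refine ⟨e, ⟨Or.inl ⟨heP, heR⟩, hwe⟩, ?_⟩
      rintro f ⟨(⟨hfP, -⟩ | hf), hwf⟩
      · exact huniq f ⟨hfP, hwf⟩
      · exfalso
        rcases hf with rfl | hf
        · rcases Sym2.mem_iff.mp hwf with h | h
          · exact hw1 h
          · exact hw3 h
        · rw [Set.mem_singleton_iff.mp hf] at hwf
          rcases Sym2.mem_iff.mp hwf with h | h
          · exact hw2 h
          · exact hw4 h

/-- the "free-couple" graph on matching edges -/
def HF (G : SimpleGraph V) (M S : Set (Sym2 V)) : SimpleGraph ↥M where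
  Adj m m' := m ≠ m' ∧ ∃ x y u v : V, (m : Sym2 V) = s(x,y) ∧ (m' : Sym2 V) = s(u,v) ∧
    G.Adj x u ∧ G.Adj y v ∧ s(x,u) ∉ S ∧ s(y,v) ∉ S
  symm := ⟨by
    rintro m m' ⟨hne, x, y, u, v, h1, h2, h3, h4, h5, h6⟩
    exact ⟨hne.symm, u, v, x, y, h2, h1, h3.symm, h4.symm,
      by rwa [Sym2.eq_swap], by rwa [Sym2.eq_swap]⟩⟩
  loopless := ⟨fun m h => h.1 rfl⟩

theorem couple_ne (hM : IsPM G M) {a c : Sym2 V} (haM : a ∈ M) (hcM : c ∈ M)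
    (hne : a ≠ c) {x y u v : V} (h1 : a = s(x,y)) (h2 : c = s(u,v)) :
    x ≠ y ∧ u ≠ v ∧ x ≠ u ∧ x ≠ v ∧ y ≠ u ∧ y ≠ v := by
  have hxy : x ≠ y := fun h =>
    G.not_isDiag_of_mem_edgeSet (hM.1 haM) (h1 ▸ Sym2.mk_isDiag_iff.mpr h)
  have huv : u ≠ v := fun h =>
    G.not_isDiag_of_mem_edgeSet (hM.1 hcM) (h2 ▸ Sym2.mk_isDiag_iff.mpr h)
  have hdisj : ∀ w : V, w ∈ a → w ∉ c := fun w ha hc => hne (pm_unique hM haM ha hcM hc)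
  refine ⟨hxy, huv, ?_, ?_, ?_, ?_⟩
  · exact fun h => hdisj x (h1 ▸ Sym2.mem_iff.mpr (Or.inl rfl)) (h2 ▸ h ▸ Sym2.mem_iff.mpr (Or.inl rfl))
  · exact fun h => hdisj x (h1 ▸ Sym2.mem_iff.mpr (Or.inl rfl)) (h2 ▸ h ▸ Sym2.mem_iff.mpr (Or.inr rfl))
  · exact fun h => hdisj y (h1 ▸ Sym2.mem_iff.mpr (Or.inr rfl)) (h2 ▸ h ▸ Sym2.mem_iff.mpr (Or.inl rfl))
  · exact fun h => hdisj y (h1 ▸ Sym2.mem_iff.mpr (Or.inr rfl)) (h2 ▸ h ▸ Sym2.mem_iff.mpr (Or.inr rfl))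

theorem pathswap {S : Set (Sym2 V)} (hM : IsPM G M) :
    ∀ {c b : ↥M} (q : (HF G M S).Walk c b), q.IsPath →
    ∀ {a : ↥M}, (HF G M S).Adj a c → a ∉ q.support →
    ∃ P1 P2 : Set (Sym2 V), IsPM G P1 ∧ IsPM G P2 ∧
      (∀ m : ↥M, m ≠ a → m ∉ q.support → ((m : Sym2 V) ∈ P1 ∧ (m : Sym2 V) ∈ P2)) ∧
      ((a : Sym2 V) ∉ P1) ∧ ((a : Sym2 V) ∈ P2) ∧
      (∀ z ∈ S, z ≠ (a : Sym2 V) → z ≠ (b : Sym2 V) → (z ∈ P1 ↔ z ∈ P2)) := by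
  intro c b q
  induction q with
  | nil =>
    rename_i c0
    intro _ a ha hsupp
    obtain ⟨hne, x, y, u, v, h1, h2, h3, h4, h5, h6⟩ := ha
    have hane : (a : Sym2 V) ≠ (c0 : Sym2 V) := fun h => hne (Subtype.ext h)
    obtain ⟨hxy, huv, hxu, hxv, hyu, hyv⟩ := couple_ne hM a.2 c0.2 hane h1 h2
    have haxu : (a : Sym2 V) ≠ s(x,u) := by
      rw [h1]
      intro hh
      rcases Sym2.eq_iff.mp hh with ⟨-, h'⟩ | ⟨h', -⟩
      · exact hyu h'
      · exact hxu h'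
    have hayv : (a : Sym2 V) ≠ s(y,v) := by
      rw [h1]
      intro hh
      rcases Sym2.eq_iff.mp hh with ⟨h', -⟩ | ⟨h', -⟩
      · exact hxy h'
      · exact hxv h'
    refine ⟨(M \ {(a : Sym2 V), (c0 : Sym2 V)}) ∪ {s(x,u), s(y,v)}, M, ?_, hM, ?_, ?_, a.2, ?_⟩
    · have := swap_pm hM (h1 ▸ a.2) (h2 ▸ c0.2) (h1 ▸ h2 ▸ hane) h3 h4
      rwa [← h1, ← h2] at this
    · intro m hma hmc
      have hmc' : m ≠ c0 := fun h => hmc (h ▸ SimpleGraph.Walk.start_mem_support _)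
      refine ⟨Or.inl ⟨m.2, ?_⟩, m.2⟩
      rintro (h | h)
      · exact hma (Subtype.ext h)
      · exact hmc' (Subtype.ext (Set.mem_singleton_iff.mp h))
    · rintro (⟨-, hR⟩ | h)
      · exact hR (Or.inl rfl)
      · rcases h with h | h
        · exact haxu h
        · exact hayv (Set.mem_singleton_iff.mp h)
    · intro z hzS hza hzc
      constructor
      · rintro (⟨hz, -⟩ | h)
        · exact hz
        · rcases h with h | h
          · exact absurd (h ▸ hzS) h5
          · exact absurd ((Set.mem_singleton_iff.mp h) ▸ hzS) h6
      · intro hz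
        refine Or.inl ⟨hz, ?_⟩
        rintro (h | h)
        · exact hza h
        · exact hzc (Set.mem_singleton_iff.mp h)
  | cons hadj p ih =>
    rename_i c0 c1 bb
    intro hq a ha hsupp
    -- q = cons hadj p,  hadj : HF.Adj c0 c1,  p : Walk c1 bb
    have hq' : p.IsPath := hq.of_cons
    have hc0p : c0 ∉ p.support := (SimpleGraph.Walk.cons_isPath_iff hadj p).mp hq |>.2
    obtain ⟨P1', P2', hP1', hP2', hout', hc0notP1', hc0P2', htr'⟩ := ih hq' hadj hc0p
    obtain ⟨hne, x, y, u, v, h1, h2, h3, h4, h5, h6⟩ := ha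
    have hane : (a : Sym2 V) ≠ (c0 : Sym2 V) := fun h => hne (Subtype.ext h)
    obtain ⟨hxy, huv, hxu, hxv, hyu, hyv⟩ := couple_ne hM a.2 c0.2 hane h1 h2
    have hap : a ∉ p.support := by
      intro h
      apply hsupp
      rw [SimpleGraph.Walk.support_cons]
      exact List.mem_cons_of_mem _ h
    have haP2' : (a : Sym2 V) ∈ P2' := (hout' a hne hap).2
    have haP1' : (a : Sym2 V) ∈ P1' := (hout' a hne hap).1
    have haxu : (a : Sym2 V) ≠ s(x,u) := by
      rw [h1]
      intro hh
      rcases Sym2.eq_iff.mp hh with ⟨-, h'⟩ | ⟨h', -⟩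
      · exact hyu h'
      · exact hxu h'
    have hayv : (a : Sym2 V) ≠ s(y,v) := by
      rw [h1]
      intro hh
      rcases Sym2.eq_iff.mp hh with ⟨h', -⟩ | ⟨h', -⟩
      · exact hxy h'
      · exact hxv h'
    have hcxu : (c0 : Sym2 V) ≠ s(x,u) := by
      rw [h2]
      intro hh
      rcases Sym2.eq_iff.mp hh with ⟨h', -⟩ | ⟨-, h'⟩
      · exact hxu h'.symm
      · exact hxv h'.symm
    have hcyv : (c0 : Sym2 V) ≠ s(y,v) := by
      rw [h2]
      intro hh
      rcases Sym2.eq_iff.mp hh with ⟨h', -⟩ | ⟨h', -⟩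
      · exact hyu h'.symm
      · exact huv h'
    set P1 : Set (Sym2 V) := (P2' \ {(a : Sym2 V), (c0 : Sym2 V)}) ∪ {s(x,u), s(y,v)}
      with hP1def
    refine ⟨P1, P1', ?_, hP1', ?_, ?_, haP1', ?_⟩
    · have := swap_pm hP2' (h1 ▸ haP2') (h2 ▸ hc0P2') (h1 ▸ h2 ▸ hane) h3 h4
      rwa [← h1, ← h2] at this
    · intro m hma hmq
      have hmc0 : m ≠ c0 := by
        intro h
        apply hmq
        rw [SimpleGraph.Walk.support_cons, h]
        exact List.mem_cons_self
      have hmp : m ∉ p.support := by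
        intro h
        apply hmq
        rw [SimpleGraph.Walk.support_cons]
        exact List.mem_cons_of_mem _ h
      obtain ⟨hm1, hm2⟩ := hout' m hmc0 hmp
      refine ⟨Or.inl ⟨hm2, ?_⟩, hm1⟩
      rintro (h | h)
      · exact hma (Subtype.ext h)
      · exact hmc0 (Subtype.ext (Set.mem_singleton_iff.mp h))
    · rintro (⟨-, hR⟩ | h)
      · exact hR (Or.inl rfl)
      · rcases h with h | h
        · exact haxu h
        · exact hayv (Set.mem_singleton_iff.mp h)
    · intro z hzS hza hzb
      by_cases hzc : z = (c0 : Sym2 V)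
      · subst hzc
        constructor
        · rintro (⟨-, hR⟩ | h)
          · exact absurd (Or.inr rfl) hR
          · rcases h with h | h
            · exact absurd h hcxu
            · exact absurd (Set.mem_singleton_iff.mp h) hcyv
        · intro h
          exact absurd h hc0notP1'
      · constructor
        · rintro (⟨hz, -⟩ | h)
          · exact (htr' _ hzS hzc hzb).mpr hz
          · rcases h with h | h
            · exact absurd (h ▸ hzS) h5
            · exact absurd ((Set.mem_singleton_iff.mp h) ▸ hzS) h6
        · intro hz
          refine Or.inl ⟨(htr' _ hzS hzc hzb).mp hz, ?_⟩
          rintro (h | h)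
          · exact hza h
          · exact hzc (Set.mem_singleton_iff.mp h)

theorem reach_not_S {S : Set (Sym2 V)} (hM : IsPM G M) (hS : IsGFS G S)
    {a b : ↥M} (hne : a ≠ b) (hr : (HF G M S).Reachable a b) :
    (a : Sym2 V) ∈ S ∨ (b : Sym2 V) ∈ S := by
  classical
  by_contra hc
  push_neg at hc
  obtain ⟨haS, hbS⟩ := hc
  obtain ⟨w⟩ := hr
  obtain ⟨p, hp⟩ : ∃ p : (HF G M S).Walk a b, p.IsPath := ⟨w.toPath.1, w.toPath.2⟩
  cases p with
  | nil => exact hne rfl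
  | cons hadj q =>
    have hq : q.IsPath := hp.of_cons
    have haq : a ∉ q.support := ((SimpleGraph.Walk.cons_isPath_iff hadj q).mp hp).2
    obtain ⟨P1, P2, hP1, hP2, -, haP1, haP2, htr⟩ := pathswap hM q hq hadj haq
    have htrace : P1 ∩ S = P2 ∩ S := by
      ext z
      constructor
      · rintro ⟨hz1, hzS⟩
        exact ⟨(htr z hzS (fun h => haS (h ▸ hzS)) (fun h => hbS (h ▸ hzS))).mp hz1, hzS⟩
      · rintro ⟨hz2, hzS⟩
        exact ⟨(htr z hzS (fun h => haS (h ▸ hzS)) (fun h => hbS (h ▸ hzS))).mpr hz2, hzS⟩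
    have := hS.2 P1 P2 hP1 hP2 htrace
    rw [this] at haP1
    exact haP1 haP2

noncomputable def meN (hM : IsPM G M) (v : V) : ↥M := ⟨me hM v, me_mem hM v⟩

/-- quotient graph on connected components of `HF` -/
def Hq (G : SimpleGraph V) (M S : Set (Sym2 V)) (hM : IsPM G M) :
    SimpleGraph ((HF G M S).ConnectedComponent) where
  Adj k k' := k ≠ k' ∧ ∃ p q : V, G.Adj p q ∧
    (HF G M S).connectedComponentMk (meN hM p) = k ∧
    (HF G M S).connectedComponentMk (meN hM q) = k'
  symm := ⟨by
    rintro k k' ⟨hne, p, q, h1, h2, h3⟩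
    exact ⟨hne.symm, q, p, h1.symm, h3, h2⟩⟩
  loopless := ⟨fun k h => h.1 rfl⟩

theorem Hq_conn {S : Set (Sym2 V)} (hM : IsPM G M) (hG : G.Connected) :
    (Hq G M S hM).Connected := by
  have hNV : Nonempty V := hG.nonempty
  have key : ∀ v w : V, G.Reachable v w →
      (Hq G M S hM).Reachable ((HF G M S).connectedComponentMk (meN hM v))
        ((HF G M S).connectedComponentMk (meN hM w)) := by
    intro v w hr
    obtain ⟨wk⟩ := hr
    induction wk with
    | nil => exact SimpleGraph.Reachable.refl _
    | cons hadj p ihp =>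
      rename_i v0 v1 w0
      refine SimpleGraph.Reachable.trans ?_ ihp
      by_cases heq : (HF G M S).connectedComponentMk (meN hM v0) =
          (HF G M S).connectedComponentMk (meN hM v1)
      · rw [heq]
      · exact SimpleGraph.Adj.reachable ⟨heq, v0, v1, hadj, rfl, rfl⟩
  rw [connected_iff]
  refine ⟨?_, ?_⟩
  · intro k k'
    obtain ⟨m, rfl⟩ := k.exists_rep
    obtain ⟨m', rfl⟩ := k'.exists_rep
    have h1 : meN hM (m : Sym2 V).out.1 = m :=
      Subtype.ext (me_eq hM m.2 (Sym2.out_fst_mem _))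
    have h2 : meN hM (m' : Sym2 V).out.1 = m' :=
      Subtype.ext (me_eq hM m'.2 (Sym2.out_fst_mem _))
    have := key _ _ (hG.preconnected (m : Sym2 V).out.1 (m' : Sym2 V).out.1)
    rwa [h1, h2] at this
  · exact ⟨(HF G M S).connectedComponentMk (meN hM (Classical.arbitrary V))⟩

/-- every connected graph on `n` vertices has at least `n - 1` edges -/
theorem conn_card_le {W : Type*} [Fintype W] {Q : SimpleGraph W} (hQ : Q.Connected) :
    Fintype.card W ≤ Q.edgeSet.ncard + 1 := by
  classical
  obtain ⟨root⟩ : Nonempty W := hQ.nonempty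
  have hpar : ∀ w : W, w ≠ root → ∃ u, Q.Adj w u ∧ Q.dist u root < Q.dist w root := by
    intro w hw
    obtain ⟨p, hp⟩ := (hQ.preconnected w root).exists_walk_length_eq_dist
    cases p with
    | nil => exact absurd rfl hw
    | cons h q =>
      rename_i u
      refine ⟨u, h, ?_⟩
      have h1 : Q.dist u root ≤ q.length := SimpleGraph.dist_le q
      rw [SimpleGraph.Walk.length_cons] at hp
      omega
  choose par hadj hdist using hpar
  set f : W → Sym2 W := fun w => if h : w = root then s(root, root) else s(w, par w h)
    with hf
  have hmaps : ∀ w ∈ Finset.univ.erase root, f w ∈ Q.edgeSet.toFinite.toFinset := by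
    intro w hw
    have hwr : w ≠ root := Finset.ne_of_mem_erase hw
    rw [Set.Finite.mem_toFinset, hf]
    simp only [dif_neg hwr]
    exact (SimpleGraph.mem_edgeSet Q).mpr (hadj w hwr)
  have hinj : Set.InjOn f ↑(Finset.univ.erase root) := by
    intro w1 hw1 w2 hw2 hfe
    have h1 : w1 ≠ root := by simpa using hw1
    have h2 : w2 ≠ root := by simpa using hw2
    rw [hf] at hfe
    simp only [dif_neg h1, dif_neg h2] at hfe
    rcases Sym2.eq_iff.mp hfe with ⟨h', -⟩ | ⟨ha', hb'⟩
    · exact h'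
    · exfalso
      have d1 := hdist w1 h1
      have d2 := hdist w2 h2
      rw [hb'] at d1
      rw [← ha'] at d2
      omega
  have hcard := Finset.card_le_card_of_injOn f hmaps hinj
  rw [Finset.card_erase_of_mem (Finset.mem_univ root), Finset.card_univ] at hcard
  rw [Set.ncard_eq_toFinset_card _ (Q.edgeSet.toFinite)]
  have : 1 ≤ Fintype.card W := Fintype.card_pos_iff.mpr ⟨root⟩
  omega

theorem Hq_edge_bound [Fintype V] (hNV : Nonempty V) {S : Set (Sym2 V)} (hM : IsPM G M)
    (pp : ∀ {x y u v : V}, s(x,y) ∈ M → s(u,v) ∈ M → s(x,y) ≠ s(u,v) →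
      G.Adj x u → G.Adj y v) :
    (Hq G M S hM).edgeSet.ncard ≤ (S \ M).ncard := by
  classical
  haveI := hNV
  have key : ∀ e ∈ (Hq G M S hM).edgeSet, ∃ z, z ∈ S \ M ∧ ∃ p q : V,
      z = s(p,q) ∧ e = s((HF G M S).connectedComponentMk (meN hM p),
        (HF G M S).connectedComponentMk (meN hM q)) := by
    intro e he
    rw [← mk_out e] at he
    have hadj := (SimpleGraph.mem_edgeSet _).mp he
    obtain ⟨hne, p, q, hpq, hk, hk'⟩ := hadj
    have hMne : meN hM p ≠ meN hM q := by
      intro h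
      exact hne (by rw [← hk, ← hk', h])
    have hmepq : me hM p ≠ me hM q := fun h => hMne (Subtype.ext h)
    have hp1 : (s(p, pr hM p) : Sym2 V) ∈ M := (pr_spec hM p) ▸ me_mem hM p
    have hp2 : (s(q, pr hM q) : Sym2 V) ∈ M := (pr_spec hM q) ▸ me_mem hM q
    have hp3 : (s(p, pr hM p) : Sym2 V) ≠ s(q, pr hM q) := by
      rw [pr_spec hM p, pr_spec hM q]; exact hmepq
    have hadj2 : G.Adj (pr hM p) (pr hM q) := pp hp1 hp2 hp3 hpq
    have hnotHF : ¬ (HF G M S).Adj (meN hM p) (meN hM q) := by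
      intro h
      exact hne (by
        rw [← hk, ← hk']
        exact SimpleGraph.ConnectedComponent.sound h.reachable)
    have hor : s(p,q) ∈ S ∨ s(pr hM p, pr hM q) ∈ S := by
      by_contra hcon
      push_neg at hcon
      exact hnotHF ⟨hMne, p, pr hM p, q, pr hM q,
        (pr_spec hM p).symm, (pr_spec hM q).symm, hpq, hadj2, hcon.1, hcon.2⟩
    have hout : e = s((HF G M S).connectedComponentMk (meN hM p),
        (HF G M S).connectedComponentMk (meN hM q)) := by
      rw [← mk_out e, hk, hk']
    rcases hor with h | h
    · refine ⟨s(p,q), ⟨h, ?_⟩, p, q, rfl, hout⟩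
      intro hzm
      have : me hM p = s(p,q) := me_eq hM hzm (Sym2.mem_iff.mpr (Or.inl rfl))
      exact hmepq (this.trans (me_eq hM hzm (Sym2.mem_iff.mpr (Or.inr rfl))).symm)
    · refine ⟨s(pr hM p, pr hM q), ⟨h, ?_⟩, pr hM p, pr hM q, rfl, ?_⟩
      · intro hzm
        have h1 : me hM (pr hM p) = s(pr hM p, pr hM q) :=
          me_eq hM hzm (Sym2.mem_iff.mpr (Or.inl rfl))
        have h2 : me hM (pr hM q) = s(pr hM p, pr hM q) :=
          me_eq hM hzm (Sym2.mem_iff.mpr (Or.inr rfl))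
        rw [me_pr hM p] at h1
        rw [me_pr hM q] at h2
        exact hmepq (h1.trans h2.symm)
      · have e1 : meN hM (pr hM p) = meN hM p := Subtype.ext (me_pr hM p)
        have e2 : meN hM (pr hM q) = meN hM q := Subtype.ext (me_pr hM q)
        rw [e1, e2]
        exact hout
  choose Z hZ using key
  set g : Sym2 ((HF G M S).ConnectedComponent) → Sym2 V := fun e =>
    if h : e ∈ (Hq G M S hM).edgeSet then Z e h else s(Classical.arbitrary V, Classical.arbitrary V)
    with hg
  apply Set.ncard_le_ncard_of_injOn g
  · intro e he
    rw [hg]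
    simp only [dif_pos he]
    exact (hZ e he).1
  · intro e1 he1 e2 he2 hge
    rw [hg] at hge
    simp only [dif_pos he1, dif_pos he2] at hge
    obtain ⟨-, p1, q1, hz1, he1'⟩ := hZ e1 he1
    obtain ⟨-, p2, q2, hz2, he2'⟩ := hZ e2 he2
    rw [hz1, hz2] at hge
    rcases Sym2.eq_iff.mp hge with ⟨ha, hb⟩ | ⟨ha, hb⟩
    · rw [he1', he2', ha, hb]
    · rw [he1', he2', ha, hb, Sym2.eq_swap]

theorem pm_card [Fintype V] (hM : IsPM G M) : Fintype.card V = 2 * M.ncard := by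
  classical
  haveI : Fintype ↥M := Fintype.ofFinite _
  have hcount : (Finset.univ : Finset V).card =
      ∑ m : ↥M, (Finset.univ.filter fun v => meN hM v = m).card :=
    Finset.card_eq_sum_card_fiberwise (fun v _ => Finset.mem_univ _)
  have hfib : ∀ m : ↥M, (Finset.univ.filter fun v => meN hM v = m).card = 2 := by
    intro m
    set x := (m : Sym2 V).out.1 with hxd
    have hx : x ∈ (m : Sym2 V) := Sym2.out_fst_mem _
    have hmex : me hM x = (m : Sym2 V) := me_eq hM m.2 hx
    have hprx : (m : Sym2 V) = s(x, pr hM x) := by rw [pr_spec hM x, hmex]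
    have hxpr : x ≠ pr hM x := fun h => pr_ne hM x h.symm
    have hset : (Finset.univ.filter fun v => meN hM v = m) = {x, pr hM x} := by
      ext v
      simp only [Finset.mem_filter, Finset.mem_univ, true_and, Finset.mem_insert,
        Finset.mem_singleton]
      constructor
      · intro h
        have hv : v ∈ (m : Sym2 V) := by
          have : me hM v = (m : Sym2 V) := congrArg Subtype.val h
          exact this ▸ mem_me hM v
        rw [hprx] at hv
        exact Sym2.mem_iff.mp hv
      · rintro (rfl | rfl)
        · exact Subtype.ext hmex
        · exact Subtype.ext ((me_pr hM x).trans hmex)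
    rw [hset, Finset.card_insert_of_notMem (by simpa using hxpr), Finset.card_singleton]
  have hsum : ∑ m : ↥M, (Finset.univ.filter fun v => meN hM v = m).card
      = 2 * Fintype.card ↥M := by
    rw [Finset.sum_congr rfl (fun m _ => hfib m)]
    simp [Finset.sum_const, Finset.card_univ, Nat.mul_comm]
  have hcard : M.ncard = Fintype.card ↥M := by
    rw [Set.ncard_eq_toFinset_card', Set.toFinset_card]
  rw [← Finset.card_univ, hcount, hsum, hcard]

theorem part2 [Fintype V] {S : Set (Sym2 V)} (hM : IsPM G M) (hG : G.Connected)
    (pp : ∀ {x y u v : V}, s(x,y) ∈ M → s(u,v) ∈ M → s(x,y) ≠ s(u,v) →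
      G.Adj x u → G.Adj y v)
    (hS : IsGFS G S) : M.ncard ≤ S.ncard + 1 := by
  classical
  have hNV : Nonempty V := hG.nonempty
  set R : Set ↥M := {m : ↥M | (m : Sym2 V) ∈ S} with hR
  have h1 : R.ncard + Rᶜ.ncard = Nat.card ↥M := Set.ncard_add_ncard_compl R
  have h2 : Nat.card ↥M = M.ncard := Nat.card_coe_set_eq M
  have h3 : R.ncard ≤ (S ∩ M).ncard := by
    refine Set.ncard_le_ncard_of_injOn (t := S ∩ M) (fun m => (m : Sym2 V)) ?_ ?_
      (Set.toFinite _)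
    · intro m hm; exact ⟨hm, m.2⟩
    · intro m1 _ m2 _ h; exact Subtype.ext h
  have h4 : Rᶜ.ncard ≤ Nat.card ((HF G M S).ConnectedComponent) := by
    have hle := Set.ncard_le_ncard_of_injOn
      (fun m : ↥M => (HF G M S).connectedComponentMk m)
      (fun m _ => Set.mem_univ ((HF G M S).connectedComponentMk m))
      (s := Rᶜ) ?_ ?_
    · rwa [Set.ncard_univ] at hle
    · intro m1 hm1 m2 hm2 h
      by_contra hne
      have hreach : (HF G M S).Reachable m1 m2 := (SimpleGraph.ConnectedComponent.eq).mp h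
      rcases reach_not_S hM hS hne hreach with hin | hin
      · exact hm1 hin
      · exact hm2 hin
    · exact Set.toFinite _
  have h5 : Nat.card ((HF G M S).ConnectedComponent) ≤ (Hq G M S hM).edgeSet.ncard + 1 := by
    haveI : Fintype ((HF G M S).ConnectedComponent) := Fintype.ofFinite _
    rw [Nat.card_eq_fintype_card]
    exact conn_card_le (Hq_conn hM hG)
  have h6 := Hq_edge_bound hNV hM @pp (S := S)
  have h7 : (S ∩ M).ncard + (S \ M).ncard = S.ncard :=
    Set.ncard_inter_add_ncard_diff_eq_ncard S M
  omega

end Part2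

end NPM


theorem stmt13 [Fintype V] (G : SimpleGraph V) (n : ℕ)
    (hcard : Fintype.card V = 2 * n) (hconn : G.Connected)
    (hnice : ∃ M, IsPM G M ∧
      (4 * af G M : ℤ) = 2 * (G.edgeSet.ncard : ℤ) - (Fintype.card V : ℤ)) :
    n - 1 ≤ gf G := by
  classical
  obtain ⟨M, hM, haf⟩ := hnice
  rcases Nat.eq_zero_or_pos n with rfl | hn
  · simp
  have hMcard : Fintype.card V = 2 * M.ncard := NPM.pm_card hM
  have hMn : M.ncard = n := by omega
  have hE : (G.edgeSet \ M).ncard + M.ncard = G.edgeSet.ncard :=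
    Set.ncard_diff_add_ncard_of_subset hM.1 (Set.toFinite _)
  have hTn : 2 * af G M = (G.edgeSet \ M).ncard := by
    have h2 : (G.edgeSet.ncard : ℤ) = ((G.edgeSet \ M).ncard : ℤ) + (M.ncard : ℤ) := by
      exact_mod_cast hE.symm
    rw [hcard] at haf
    have h3 : (4 * af G M : ℤ) = 2 * ((G.edgeSet \ M).ncard : ℤ) := by
      rw [haf, h2]
      have hnM : ((2 * n : ℕ) : ℤ) = 2 * (M.ncard : ℤ) := by
        push_cast
        omega
      rw [hnM]
      ring
    exact_mod_cast (by linarith : (2 * af G M : ℤ) = ((G.edgeSet \ M).ncard : ℤ))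
  have haf' : 2 * af G M = (NPM.Tf G M).card := by
    rw [hTn]
    exact Set.ncard_eq_toFinset_card _ _
  have pp := @NPM.pairing V G M _ hM haf'
  have hgfs_full : IsGFS G G.edgeSet := ⟨subset_rfl, fun M1 M2 h1 h2 he => by
    rwa [Set.inter_eq_left.mpr h1.1, Set.inter_eq_left.mpr h2.1] at he⟩
  refine le_csInf ⟨G.edgeSet.ncard, G.edgeSet, hgfs_full, rfl⟩ ?_
  rintro k ⟨S, hS, rfl⟩
  have := NPM.part2 hM hconn (fun {x y u v} h1 h2 h3 h4 => pp h1 h2 h3 h4) hS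
  omega
end

section
/- If the perfect matching polytope PM(G) of a graph G equals the set of all non-negative 1-regular vectors in R^{E(G)}, then G contains no two vertex-disjoint odd cycles C, C′ such that G − C − C′ has a perfect matching. -/
open SimpleGraph

variable {V : Type*}

section AuxLemmas

variable {G : SimpleGraph V}

lemma mem_support_of_mem_edges'' {u u' : V} {p : G.Walk u u'} {e : Sym2 V}
    (he : e ∈ p.edges) {v : V} (hv : v ∈ e) : v ∈ p.support := by
  induction e using Sym2.ind with
  | _ x y =>
    rcases Sym2.mem_iff.mp hv with rfl | rfl
    · exact p.fst_mem_support_of_mem_edges he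
    · exact p.snd_mem_support_of_mem_edges he

lemma path_edge_count [DecidableEq V] {u v : V} (p : G.Walk u v) (hp : p.IsPath) :
    (p.edges.filter (fun e => v ∈ e)).length = if p.length = 0 then 0 else 1 := by
  induction p with
  | nil => simp
  | @cons u w v h q ih =>
    rw [Walk.cons_isPath_iff] at hp
    cases q with
    | nil => simp
    | @cons w w' v h' q' =>
      have hvq : v ∈ (Walk.cons h' q').support := Walk.end_mem_support _
      have huv : u ≠ v := fun hh => hp.2 (hh ▸ hvq)
      have hwv : w ≠ v := by
        rintro rfl
        have h2 := hp.1
        rw [Walk.cons_isPath_iff] at h2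
        exact h2.2 (Walk.end_mem_support q')
      have hne : ¬ v ∈ s(u, w) := by
        rw [Sym2.mem_iff]
        push_neg
        exact ⟨huv.symm ∘ Eq.symm ∘ Eq.symm, fun hh => hwv hh.symm⟩
      have := ih hp.1
      simp only [Walk.edges_cons, List.filter_cons, hne, decide_false] at this ⊢
      simpa using this

lemma cycle_edge_count_start [DecidableEq V] {a : V} (c : G.Walk a a) (hc : c.IsCycle) :
    (c.edges.filter (fun e => a ∈ e)).length = 2 := by
  obtain ⟨w, h, q, rfl⟩ := Walk.not_nil_iff.mp hc.not_nil
  have hq : q.IsPath := ((Walk.cons_isCycle_iff q h).mp hc).1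
  have h3 := hc.three_le_length
  have hql : q.length ≠ 0 := by rw [Walk.length_cons] at h3; omega
  have hmem : a ∈ s(a, w) := by simp
  simp only [Walk.edges_cons, List.filter_cons, hmem, decide_true, if_pos, List.length_cons,
    path_edge_count q hq, hql, if_neg]
  simp [hql]

lemma cycle_edge_count [DecidableEq V] {a : V} (c : G.Walk a a) (hc : c.IsCycle)
    {v : V} (hv : v ∈ c.support) :
    (c.edges.filter (fun e => v ∈ e)).length = 2 := by
  have h1 := cycle_edge_count_start (c.rotate v hv) (hc.rotate hv)
  rwa [((c.rotate_edges v hv).perm.filter _).length_eq] at h1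

lemma cycle_support_card [Fintype V] [DecidableEq V] {a : V} (c : G.Walk a a) (hc : c.IsCycle) :
    (Finset.univ.filter (· ∈ c.support)).card = c.length := by
  obtain ⟨w, h, q, rfl⟩ := Walk.not_nil_iff.mp hc.not_nil
  have hnd : (Walk.cons h q).support.tail.Nodup := hc.2
  have hset : Finset.univ.filter (· ∈ (Walk.cons h q).support) = q.support.toFinset := by
    ext x
    simp only [Finset.mem_filter, Finset.mem_univ, true_and, Walk.support_cons, List.mem_cons,
      List.mem_toFinset]
    constructor
    · rintro (rfl | hx)
      · exact q.end_mem_support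
      · exact hx
    · exact Or.inr
  rw [hset, List.toFinset_card_of_nodup (by simpa using hnd)]
  simp [Walk.length_support]

lemma even_inside [Fintype V] [DecidableEq V] {G : SimpleGraph V} {M : Set (Sym2 V)}
    (hM : IsPM G M) (T : V → Prop) [DecidablePred T]
    (hclosed : ∀ e ∈ M, ∀ v ∈ e, T v → ∀ w ∈ e, T w) :
    Even (Finset.univ.filter (fun v => T v)).card := by
  classical
  let H : G.Subgraph :=
    { verts := {v | T v}
      Adj := fun u w => G.Adj u w ∧ s(u, w) ∈ M ∧ T u ∧ T w
      adj_sub := fun h => h.1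
      edge_vert := fun h => h.2.2.1
      symm := ⟨fun u w ⟨h1, h2, h3, h4⟩ => ⟨h1.symm, by rwa [Sym2.eq_swap], h4, h3⟩⟩ }
  have hmatch : H.IsMatching := by
    intro v hv
    obtain ⟨e, ⟨heM, hve⟩, huniq⟩ := hM.2 v
    obtain ⟨w, rfl⟩ := Sym2.mem_iff_exists.mp hve
    have hadj : G.Adj v w := (G.mem_edgeSet).mp (hM.1 heM)
    have hTw : T w := hclosed _ heM v hve hv w (Sym2.mem_mk_right v w)
    refine ⟨w, ⟨hadj, heM, hv, hTw⟩, ?_⟩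
    rintro w' ⟨hadj', heM', -, -⟩
    have := huniq s(v, w') ⟨heM', Sym2.mem_mk_left v w'⟩
    exact Sym2.congr_right.mp this
  haveI : Fintype H.verts := Fintype.ofFinset (Finset.univ.filter (fun v => T v)) (by simp [H])
  have heven := hmatch.even_card
  have hv : H.verts.toFinset = Finset.univ.filter (fun v => T v) := by
    ext v; simp [H]
  rwa [hv] at heven

lemma sum_ite_mem_list [Fintype V] [DecidableEq V] (v : V) (l : List (Sym2 V)) (hl : l.Nodup)
    (c : ℝ) :
    ∑ e ∈ Finset.univ.filter (fun e : Sym2 V => v ∈ e), (if e ∈ l then c else 0)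
      = (l.filter (fun e => v ∈ e)).length * c := by
  rw [← Finset.sum_filter]
  have hset : (Finset.univ.filter (fun e : Sym2 V => v ∈ e)).filter (fun e => e ∈ l)
      = (l.filter (fun e => v ∈ e)).toFinset := by
    ext e
    simp only [Finset.mem_filter, Finset.mem_univ, true_and, List.mem_toFinset, List.mem_filter,
      decide_eq_true_eq]
    exact and_comm
  rw [hset, Finset.sum_const, List.toFinset_card_of_nodup (hl.filter _), nsmul_eq_mul]

end AuxLemmas

theorem stmt18 [Fintype V] [DecidableEq V] (G : SimpleGraph V)
    (hpoly : convexHull ℝ {x : Sym2 V → ℝ | ∃ M, IsPM G M ∧ x = M.indicator 1} =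
      {x : Sym2 V → ℝ | (∀ e, 0 ≤ x e) ∧ (∀ e, e ∉ G.edgeSet → x e = 0) ∧
        ∀ v : V, ∑ e ∈ Finset.univ.filter (fun e : Sym2 V => v ∈ e), x e = 1}) :
    ¬ ∃ (a b : V) (c₁ : G.Walk a a) (c₂ : G.Walk b b),
      c₁.IsCycle ∧ c₂.IsCycle ∧ Odd c₁.length ∧ Odd c₂.length ∧
      (∀ w, w ∈ c₁.support → w ∉ c₂.support) ∧
      PMAvoiding G ({w | w ∈ c₁.support} ∪ {w | w ∈ c₂.support}) := by
    classical
  rintro ⟨a, b, c₁, c₂, hc₁, hc₂, ho₁, ho₂, hdisj, M₀, hM₀E, hM₀A, hM₀u⟩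
  set x : Sym2 V → ℝ := fun e =>
    (if e ∈ c₁.edges then (1:ℝ)/2 else 0) + (if e ∈ c₂.edges then (1:ℝ)/2 else 0) +
      (if e ∈ M₀ then (1:ℝ) else 0) with hxdef
  have hM₀sum : ∀ v : V, v ∉ ({w | w ∈ c₁.support} ∪ {w | w ∈ c₂.support} : Set V) →
      ∑ e ∈ Finset.univ.filter (fun e : Sym2 V => v ∈ e), (if e ∈ M₀ then (1:ℝ) else 0) = 1 := by
    intro v hv
    obtain ⟨e₀, ⟨he₀, hve₀⟩, huniq⟩ := hM₀u v hv
    rw [← Finset.sum_filter]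
    have hone : (Finset.univ.filter (fun e : Sym2 V => v ∈ e)).filter (fun e => e ∈ M₀)
        = {e₀} := by
      ext e
      simp only [Finset.mem_filter, Finset.mem_univ, true_and, Finset.mem_singleton]
      constructor
      · rintro ⟨hve, heM⟩; exact huniq e ⟨heM, hve⟩
      · rintro rfl; exact ⟨hve₀, he₀⟩
    rw [hone, Finset.sum_singleton]
  have hM₀zero : ∀ v : V, v ∈ ({w | w ∈ c₁.support} ∪ {w | w ∈ c₂.support} : Set V) →
      ∑ e ∈ Finset.univ.filter (fun e : Sym2 V => v ∈ e), (if e ∈ M₀ then (1:ℝ) else 0) = 0 := by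
    intro v hv
    refine Finset.sum_eq_zero fun e he => ?_
    rw [if_neg]
    intro heM
    exact hM₀A e heM v (by simpa using he) hv
  have hempty : ∀ {u : V} (p : G.Walk u u), ∀ v : V, v ∉ p.support →
      (p.edges.filter (fun e => v ∈ e)) = [] := by
    intro u p v hv
    rw [List.filter_eq_nil_iff]
    intro e he
    simp only [decide_eq_true_eq]
    exact fun hve => hv (mem_support_of_mem_edges'' he hve)
  have hxmem : x ∈ {x : Sym2 V → ℝ | (∀ e, 0 ≤ x e) ∧ (∀ e, e ∉ G.edgeSet → x e = 0) ∧
        ∀ v : V, ∑ e ∈ Finset.univ.filter (fun e : Sym2 V => v ∈ e), x e = 1} := by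
    refine ⟨fun e => ?_, fun e he => ?_, fun v => ?_⟩
    · simp only [hxdef]
      split_ifs <;> norm_num
    · simp only [hxdef]
      rw [if_neg (fun h => he (c₁.edges_subset_edgeSet h)),
        if_neg (fun h => he (c₂.edges_subset_edgeSet h)),
        if_neg (fun h => he (hM₀E h))]
      norm_num
    · have hsplit : ∑ e ∈ Finset.univ.filter (fun e : Sym2 V => v ∈ e), x e =
          (∑ e ∈ Finset.univ.filter (fun e : Sym2 V => v ∈ e),
            (if e ∈ c₁.edges then (1:ℝ)/2 else 0))
          + (∑ e ∈ Finset.univ.filter (fun e : Sym2 V => v ∈ e),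
            (if e ∈ c₂.edges then (1:ℝ)/2 else 0))
          + ∑ e ∈ Finset.univ.filter (fun e : Sym2 V => v ∈ e),
            (if e ∈ M₀ then (1:ℝ) else 0) := by
        simp only [hxdef, Finset.sum_add_distrib]
      rw [hsplit, sum_ite_mem_list v c₁.edges hc₁.edges_nodup,
        sum_ite_mem_list v c₂.edges hc₂.edges_nodup]
      by_cases hv1 : v ∈ c₁.support
      · rw [cycle_edge_count c₁ hc₁ hv1, hempty c₂ v (hdisj v hv1), hM₀zero v (Or.inl hv1)]
        norm_num
      · by_cases hv2 : v ∈ c₂.support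
        · rw [cycle_edge_count c₂ hc₂ hv2, hempty c₁ v hv1, hM₀zero v (Or.inr hv2)]
          norm_num
        · rw [hempty c₁ v hv1, hempty c₂ v hv2, hM₀sum v (by simp [hv1, hv2])]
          norm_num
  rw [← hpoly] at hxmem
  set F : Finset (Sym2 V) :=
    Finset.univ.filter
      (fun e : Sym2 V => (∃ u ∈ e, u ∈ c₁.support) ∧ ∃ u ∈ e, u ∉ c₁.support) with hF
  have hlin : IsLinearMap ℝ (fun y : Sym2 V → ℝ => ∑ e ∈ F, y e) := by
    constructor
    · intro y z; exact Finset.sum_add_distrib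
    · intro c y; simp [Finset.mul_sum, smul_eq_mul]
  have hgen : {y : Sym2 V → ℝ | ∃ M, IsPM G M ∧ y = M.indicator 1} ⊆
      {y : Sym2 V → ℝ | 1 ≤ ∑ e ∈ F, y e} := by
    rintro y ⟨M, hM, rfl⟩
    have hcrossing : ∃ e ∈ M, (∃ u ∈ e, u ∈ c₁.support) ∧ ∃ u ∈ e, u ∉ c₁.support := by
      by_contra hno
      push_neg at hno
      have heven := even_inside hM (fun v => v ∈ c₁.support)
        (fun e heM u hue hu w hwe => hno e heM ⟨u, hue, hu⟩ w hwe)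
      rw [cycle_support_card c₁ hc₁] at heven
      rcases ho₁ with ⟨k, hk⟩
      rcases heven with ⟨m, hm⟩
      omega
    obtain ⟨e₀, he₀M, hcr⟩ := hcrossing
    have he₀F : e₀ ∈ F := by
      rw [hF, Finset.mem_filter]
      exact ⟨Finset.mem_univ _, hcr⟩
    have h1 : M.indicator (1 : Sym2 V → ℝ) e₀ = 1 := by
      simp [Set.indicator_of_mem he₀M]
    calc (1:ℝ) = M.indicator 1 e₀ := h1.symm
      _ ≤ ∑ e ∈ F, M.indicator 1 e :=
        Finset.single_le_sum (fun e _ => Set.indicator_nonneg (fun _ _ => zero_le_one) e) he₀F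
  have hge := convexHull_min hgen (convex_halfSpace_ge hlin 1) hxmem
  have hzero : ∑ e ∈ F, x e = 0 := by
    refine Finset.sum_eq_zero fun e he => ?_
    rw [hF, Finset.mem_filter] at he
    obtain ⟨-, ⟨u₁, hu₁e, hu₁⟩, ⟨u₂, hu₂e, hu₂⟩⟩ := he
    have h1 : e ∉ c₁.edges := fun h => hu₂ (mem_support_of_mem_edges'' h hu₂e)
    have h2 : e ∉ c₂.edges := fun h => hdisj u₁ hu₁ (mem_support_of_mem_edges'' h hu₁e)
    have h3 : e ∉ M₀ := fun h => hM₀A e h u₁ hu₁e (Or.inl hu₁)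
    simp [hxdef, h1, h2, h3]
  rw [Set.mem_setOf_eq, hzero] at hge
  linarith
end
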